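/- Let (X, F, θ, T) be an ergodic measure-preserving system, let (G_t)_{t>0} be a measurable family of functions with sup_t |G_t| ∈ L¹(θ) and G = lim_{t→0} G_t existing θ-a.e. Suppose t_{N,n} : X → ℝ are functions such that for θ-a.e. x and every ε > 0, for all large N we have |t_{N,n}(x)| < ε for all 1 ≤ n ≤ (1−ε)N. Then (1/N) Σ_{n=1}^N G_{t_{N,n}(x)}(T^n x) → ∫ G dθ for θ-a.e. x. -/

import Mathlib

open MeasureTheory Filter


open MeasureTheory Filter Set Topology MeasurableSpace
open scoped ENNReal NNReal

namespace MakerAux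

variable {α : Type*} [TopologicalSpace α] [PolishSpace α] [MeasurableSpace α] [BorelSpace α]

/-- Key step: inner approximation of the range of a continuous function from `ℕ → ℕ`. -/
theorem exists_measurable_le_range (μ : Measure α) [IsFiniteMeasure μ]
    {f : (ℕ → ℕ) → α} (hf : Continuous f) {m : ℝ≥0∞} (hm : m < μ (range f)) :
    ∃ L : Set α, MeasurableSet L ∧ L ⊆ range f ∧ m ≤ μ L := by
  letI := TopologicalSpace.upgradeIsCompletelyMetrizable α
  -- family of constrained sets
  set F : (ℕ → ℕ) → ℕ → Set (ℕ → ℕ) := fun τ n => {x | ∀ i < n, x i ≤ τ i} with hF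
  have key : ∀ (τ : ℕ → ℕ) (n : ℕ), m < μ (f '' F τ n) →
      ∃ j : ℕ, m < μ (f '' F (Function.update τ n j) (n + 1)) := by
    intro τ n hτ
    have hdecomp : ∀ j, F (Function.update τ n j) (n + 1) = F τ n ∩ {x | x n ≤ j} := by
      intro j
      ext x
      constructor
      · intro hx
        refine ⟨fun i hi => ?_, ?_⟩
        · have := hx i (by omega)
          rwa [Function.update_of_ne (by omega)] at this
        · have := hx n (by omega)
          rwa [Function.update_self] at this
      · rintro ⟨hx1, hx2⟩ i hi
        rcases Nat.lt_succ_iff_lt_or_eq.1 hi with h | h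
        · rw [Function.update_of_ne (by omega)]; exact hx1 i h
        · subst h; rwa [Function.update_self]
    have hmono : Monotone (fun j => f '' (F τ n ∩ {x | x n ≤ j})) := by
      intro a b hab
      exact image_mono (inter_subset_inter_right _ (fun x hx => le_trans hx hab))
    have hunion : (⋃ j, f '' (F τ n ∩ {x | x n ≤ j})) = f '' F τ n := by
      rw [← image_iUnion]
      apply Subset.antisymm
      · exact image_mono (iUnion_subset fun j => inter_subset_left)
      · rintro b ⟨x, hx, rfl⟩
        exact mem_image_of_mem f (mem_iUnion.2 ⟨x n, hx, by simp⟩)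
    have hiU := hmono.measure_iUnion (μ := μ)
    rw [hunion] at hiU
    rw [hiU] at hτ
    obtain ⟨j, hj⟩ := lt_iSup_iff.1 hτ
    exact ⟨j, by rwa [hdecomp j]⟩
  have hbase : m < μ (f '' F (fun _ => 0) 0) := by
    have h0 : F (fun _ => 0) 0 = univ := by ext x; simp [hF]
    rwa [h0, image_univ]
  -- recursive construction of the bounding sequence
  let seq : (n : ℕ) → {τ : ℕ → ℕ // m < μ (f '' F τ n)} := fun n =>
    Nat.rec ⟨fun _ => 0, hbase⟩
      (fun k ih => ⟨Function.update ih.1 k (key ih.1 k ih.2).choose,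
        (key ih.1 k ih.2).choose_spec⟩) n
  have hseq_succ : ∀ k, (seq (k + 1)).1 =
      Function.update (seq k).1 k (key (seq k).1 k (seq k).2).choose := fun k => rfl
  have hcoh : ∀ k n, n < k → (seq k).1 n = (seq (n + 1)).1 n := by
    intro k
    induction k with
    | zero => intro n hn; omega
    | succ k ih =>
      intro n hn
      rcases Nat.lt_succ_iff_lt_or_eq.1 hn with h | h
      · rw [hseq_succ k, Function.update_of_ne (by omega)]
        exact ih n h
      · subst h; rfl
  set τ : ℕ → ℕ := fun n => (seq (n + 1)).1 n with hτdef
  have hFτ : ∀ n, F τ n = F (seq n).1 n := by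
    intro n
    ext x
    simp only [hF, mem_setOf_eq]
    constructor <;> intro hx i hi
    · rw [hcoh n i hi]; exact hx i hi
    · show x i ≤ (seq (i + 1)).1 i
      rw [← hcoh n i hi]; exact hx i hi
  have hmes : ∀ n, m < μ (f '' F τ n) := fun n => by rw [hFτ n]; exact (seq n).2
  -- the compact set and the decreasing closures
  set K : Set (ℕ → ℕ) := Set.pi univ (fun i => Iic (τ i)) with hK
  have hKcomp : IsCompact K := isCompact_univ_pi (fun i => (Set.finite_Iic _).isCompact)
  set D : ℕ → Set α := fun n => closure (f '' F τ n) with hD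
  have hDanti : Antitone D := by
    intro a b hab
    exact closure_mono (image_mono (fun x hx i hi => hx i (lt_of_lt_of_le hi hab)))
  have hDmeas : ∀ n, NullMeasurableSet (D n) μ := fun n =>
    isClosed_closure.measurableSet.nullMeasurableSet
  have hDge : ∀ n, m ≤ μ (D n) := fun n =>
    le_trans (hmes n).le (measure_mono subset_closure)
  set L : Set α := ⋂ n, D n with hL
  have hLmeas : MeasurableSet L := MeasurableSet.iInter (fun n => isClosed_closure.measurableSet)
  have hLge : m ≤ μ L := by
    rw [hL, hDanti.measure_iInter hDmeas ⟨0, measure_ne_top μ _⟩]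
    exact le_iInf hDge
  refine ⟨L, hLmeas, ?_, hLge⟩
  -- L ⊆ range f
  intro z hz
  have hmem : ∀ n : ℕ, ∃ x ∈ F τ n, dist z (f x) < 1 / (n + 1) := by
    intro n
    have hzD : z ∈ D n := mem_iInter.1 hz n
    rw [hD] at hzD
    rcases Metric.mem_closure_iff.1 hzD (1 / (n + 1)) (by positivity) with ⟨b, hb, hdist⟩
    rcases hb with ⟨x, hx, rfl⟩
    exact ⟨x, hx, hdist⟩
  choose x hxF hxdist using hmem
  set y : ℕ → (ℕ → ℕ) := fun n i => min (x n i) (τ i) with hy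
  have hyK : ∀ n, y n ∈ K := fun n => by
    intro i _
    exact mem_Iic.2 (min_le_right _ _)
  obtain ⟨a, haK, φ, hφ, hconv⟩ := hKcomp.tendsto_subseq hyK
  -- the original subsequence also converges to a
  have hxconv : Tendsto (fun j => x (φ j)) atTop (𝓝 a) := by
    rw [tendsto_pi_nhds]
    intro i
    have h1 : Tendsto (fun j => y (φ j) i) atTop (𝓝 (a i)) := (tendsto_pi_nhds.1 hconv) i
    have h2 : ∀ᶠ j in atTop, y (φ j) i = a i := by
      filter_upwards [h1 ((isOpen_discrete {a i}).mem_nhds rfl)] with j hj using hj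
    have h3 : ∀ᶠ j in atTop, i < φ j :=
      hφ.tendsto_atTop.eventually_gt_atTop i
    have h4 : ∀ᶠ j in atTop, x (φ j) i = a i := by
      filter_upwards [h2, h3] with j hj2 hj3
      have : x (φ j) i ≤ τ i := hxF (φ j) i hj3
      rw [← hj2, hy]
      simp [min_eq_left this]
    exact Tendsto.congr' (by filter_upwards [h4] with j hj using hj.symm) tendsto_const_nhds
  have hfz : Tendsto (fun j => f (x (φ j))) atTop (𝓝 z) := by
    have hdist : Tendsto (fun j => dist z (f (x (φ j)))) atTop (𝓝 0) := by
      apply squeeze_zero (fun j => dist_nonneg) (fun j => (hxdist (φ j)).le.trans ?_)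
      · exact tendsto_one_div_add_atTop_nhds_zero_nat
      · have h5 : j ≤ φ j := hφ.le_apply
        have : (j : ℝ) + 1 ≤ (φ j : ℝ) + 1 := by exact_mod_cast Nat.add_le_add_right h5 1
        apply one_div_le_one_div_of_le (by positivity) this
    rw [tendsto_iff_dist_tendsto_zero]
    simpa [dist_comm] using hdist
  have hfa : Tendsto (fun j => f (x (φ j))) atTop (𝓝 (f a)) := (hf.tendsto a).comp hxconv
  exact ⟨a, tendsto_nhds_unique hfa hfz⟩

/-- Capacitability: analytic sets are null-measurable for any finite Borel measure. -/
theorem _root_.MeasureTheory.AnalyticSet.nullMeasurableSet {A : Set α} (hA : AnalyticSet A)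
    (μ : Measure α) [IsFiniteMeasure μ] : NullMeasurableSet A μ := by
  rw [AnalyticSet] at hA
  rcases hA with rfl | ⟨f, hf, rfl⟩
  · exact MeasurableSet.empty.nullMeasurableSet
  by_cases h0 : μ (range f) = 0
  · exact NullMeasurableSet.of_null h0
  -- build an inner measurable set of full outer measure
  have key : ∀ m : ℝ≥0∞, m < μ (range f) →
      ∃ L : Set α, MeasurableSet L ∧ L ⊆ range f ∧ m ≤ μ L :=
    fun m hm => exists_measurable_le_range μ hf hm
  set B : Set α := ⋃ n : ℕ, (if h : (μ (range f) - ((n : ℝ≥0∞) + 1)⁻¹) < μ (range f)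
    then (key _ h).choose else ∅) with hB
  have hBmeas : MeasurableSet B := by
    apply MeasurableSet.iUnion
    intro n
    split_ifs with h
    · exact (key _ h).choose_spec.1
    · exact MeasurableSet.empty
  have hBsub : B ⊆ range f := by
    apply iUnion_subset
    intro n
    split_ifs with h
    · exact (key _ h).choose_spec.2.1
    · exact empty_subset _
  have hBfull : μ (range f) ≤ μ B := by
    apply ENNReal.le_of_forall_pos_le_add
    intro ε hε _
    rcases exists_nat_gt (ε : ℝ)⁻¹ with ⟨n, hn⟩
    have hlt : ((n : ℝ≥0∞) + 1)⁻¹ < ε := by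
      rw [ENNReal.inv_lt_iff_inv_lt]
      calc (ε : ℝ≥0∞)⁻¹ < n := by
            rw [← ENNReal.coe_inv hε.ne', ENNReal.coe_lt_natCast]
            exact_mod_cast hn
        _ < n + 1 := by exact_mod_cast lt_add_one _
    have h : (μ (range f) - ((n : ℝ≥0∞) + 1)⁻¹) < μ (range f) := by
      apply ENNReal.sub_lt_self (measure_ne_top μ _) h0
      exact ENNReal.inv_ne_zero.2 (by simp)
    calc μ (range f) ≤ (μ (range f) - ((n : ℝ≥0∞) + 1)⁻¹) + ((n : ℝ≥0∞) + 1)⁻¹ :=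
          le_tsub_add
      _ ≤ μ B + ε := by
          apply add_le_add
          · refine le_trans (key _ h).choose_spec.2.2 (measure_mono ?_)
            refine subset_trans ?_ (subset_iUnion _ n)
            rw [dif_pos h]
          · exact hlt.le
  -- conclude null-measurability
  have hdiff : μ (range f \ B) = 0 := by
    have h1 : range f \ B ⊆ toMeasurable μ (range f) \ B :=
      diff_subset_diff_left (subset_toMeasurable μ _)
    refine measure_mono_null h1 ?_
    rw [measure_diff (hBsub.trans (subset_toMeasurable μ _)) hBmeas.nullMeasurableSet
      (measure_ne_top μ _), measure_toMeasurable]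
    exact tsub_eq_zero_of_le hBfull
  have : range f = B ∪ (range f \ B) := (union_diff_cancel hBsub).symm
  rw [this]
  exact hBmeas.nullMeasurableSet.union (NullMeasurableSet.of_null hdiff)


variable {X : Type*} [mX : MeasurableSpace X]

private theorem prod_gen_le {c d : ℕ → Set X} (h : Set.range c ⊆ Set.range d) :
    (Real.measurableSpace).prod (generateFrom (Set.range c)) ≤
      (Real.measurableSpace).prod (generateFrom (Set.range d)) :=
  sup_le_sup le_rfl (comap_mono (generateFrom_mono h))

/-- Every product-measurable set in `ℝ × X` is measurable for a countably generated
sub-σ-algebra of the one of `X`. -/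
theorem exists_countable_gen {S : Set (ℝ × X)} (hS : MeasurableSet S) :
    ∃ c : ℕ → Set X, (∀ i, MeasurableSet (c i)) ∧
      MeasurableSet[(Real.measurableSpace).prod (generateFrom (Set.range c))] S := by
  let P : Set (ℝ × X) → Prop := fun S => ∃ c : ℕ → Set X, (∀ i, MeasurableSet (c i)) ∧
      MeasurableSet[(Real.measurableSpace).prod (generateFrom (Set.range c))] S
  let m0 : MeasurableSpace (ℝ × X) :=
    { MeasurableSet' := P
      measurableSet_empty := ⟨fun _ => ∅, fun _ => MeasurableSet.empty,
        (Real.measurableSpace.prod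
          (generateFrom (Set.range (fun _ : ℕ => (∅ : Set X))))).measurableSet_empty⟩
      measurableSet_compl := by rintro s ⟨c, hc, hs⟩; exact ⟨c, hc, hs.compl⟩
      measurableSet_iUnion := by
        intro f hf
        choose c hc hmeas using hf
        refine ⟨fun n => c (Nat.unpair n).1 (Nat.unpair n).2, fun n => hc _ _, ?_⟩
        refine MeasurableSet.iUnion (fun i => prod_gen_le ?_ _ (hmeas i))
        rintro s ⟨j, rfl⟩
        exact ⟨Nat.pair i j, by simp⟩ }
  have hle : (Prod.instMeasurableSpace : MeasurableSpace (ℝ × X)) ≤ m0 := by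
    apply sup_le
    · rintro s ⟨B, hB, rfl⟩
      refine ⟨fun _ => ∅, fun _ => MeasurableSet.empty, ?_⟩
      exact (le_sup_left : Real.measurableSpace.comap Prod.fst ≤ _) _ ⟨B, hB, rfl⟩
    · rintro s ⟨C, hC, rfl⟩
      refine ⟨fun _ => C, fun _ => hC, ?_⟩
      refine (le_sup_right : (generateFrom (Set.range fun _ : ℕ => C)).comap Prod.snd ≤ _) _ ?_
      exact ⟨C, measurableSet_generateFrom ⟨0, rfl⟩, rfl⟩
  exact hle _ hS

theorem exists_countable_gen_seq (R : ℕ → Set (ℝ × X)) (hR : ∀ k, MeasurableSet (R k)) :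
    ∃ c : ℕ → Set X, (∀ i, MeasurableSet (c i)) ∧
      ∀ k, MeasurableSet[(Real.measurableSpace).prod (generateFrom (Set.range c))] (R k) := by
  choose c0 hc0 hmeas0 using fun k => exists_countable_gen (hR k)
  refine ⟨fun n => c0 (Nat.unpair n).1 (Nat.unpair n).2, fun n => hc0 _ _, fun k => ?_⟩
  refine prod_gen_le ?_ _ (hmeas0 k)
  rintro s ⟨j, rfl⟩
  exact ⟨Nat.pair k j, by simp⟩

/-- The projection lemma: decreasing product-measurable sets in `ℝ × X` whose sections
eventually vanish a.e. have projections of vanishing outer measure. -/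
theorem proj_tendsto_zero (ν : Measure X) [IsFiniteMeasure ν]
    (R : ℕ → Set (ℝ × X)) (hR : ∀ k, MeasurableSet (R k)) (hanti : Antitone R)
    (hnull : ν {y | ∀ k, ∃ t : ℝ, (t, y) ∈ R k} = 0) :
    Tendsto (fun k => ν {y | ∃ t : ℝ, (t, y) ∈ R k}) atTop (𝓝 0) := by
  classical
  obtain ⟨c, hcm, hmeasc⟩ := exists_countable_gen_seq R hR
  -- the coding map into Cantor space
  set π : X → (ℕ → Bool) := fun y i => if y ∈ c i then true else false with hπ
  have hπm : Measurable π := by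
    apply measurable_pi_lambda
    intro i
    have : (fun y => if y ∈ c i then true else false) ⁻¹' {true} = c i := by
      ext y; by_cases h : y ∈ c i <;> simp [h]
    apply measurable_to_countable'
    intro b
    cases b
    · have hf : (fun y => if y ∈ c i then true else false) ⁻¹' {false} = (c i)ᶜ := by
        ext y; by_cases h : y ∈ c i <;> simp [h]
      rw [hf]; exact (hcm i).compl
    · rw [this]; exact hcm i
  -- the generated σ-algebra is the comap of the Cantor σ-algebra
  have hgen : generateFrom (Set.range c) = MeasurableSpace.pi.comap π := by
    apply le_antisymm
    · apply generateFrom_le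
      rintro s ⟨i, rfl⟩
      refine ⟨(fun z : ℕ → Bool => z i) ⁻¹' {true},
        measurable_pi_apply i (measurableSet_singleton true), ?_⟩
      ext y; by_cases h : y ∈ c i <;> simp [hπ, h]
    · rw [MeasurableSpace.pi, MeasurableSpace.comap_iSup]
      apply iSup_le
      intro i
      rw [MeasurableSpace.comap_comp]
      rintro s ⟨B, hB, rfl⟩
      have hcase : ((fun a : ℕ → Bool => a i) ∘ π) ⁻¹' B =
          (if true ∈ B then (if false ∈ B then univ else c i)
            else (if false ∈ B then (c i)ᶜ else ∅)) := by
        ext y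
        by_cases h : y ∈ c i <;> split_ifs <;>
          simp_all [hπ, Function.comp] <;> tauto
      have hgenmem : MeasurableSet[generateFrom (Set.range c)] (c i) :=
        measurableSet_generateFrom ⟨i, rfl⟩
      rw [hcase]
      split_ifs
      · exact MeasurableSet.univ
      · exact hgenmem
      · exact hgenmem.compl
      · exact (generateFrom (Set.range c)).measurableSet_empty
  -- product σ-algebra is below the comap of the full product σ-algebra on ℝ × Cantor
  have hprodle : (Real.measurableSpace).prod (MeasurableSpace.pi.comap π) ≤
      (Prod.instMeasurableSpace : MeasurableSpace (ℝ × (ℕ → Bool))).comap (Prod.map id π) := by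
    apply sup_le
    · intro s hs
      obtain ⟨B, hB, rfl⟩ := MeasurableSpace.measurableSet_comap.1 hs
      exact MeasurableSpace.measurableSet_comap.2 ⟨Prod.fst ⁻¹' B, measurable_fst hB, rfl⟩
    · intro s hs
      obtain ⟨s₁, hs₁, rfl⟩ := MeasurableSpace.measurableSet_comap.1 hs
      obtain ⟨B, hB, rfl⟩ := MeasurableSpace.measurableSet_comap.1 hs₁
      exact MeasurableSpace.measurableSet_comap.2 ⟨Prod.snd ⁻¹' B, measurable_snd hB, rfl⟩
  -- extract sets over Cantor space
  have hexists : ∀ k, ∃ S' : Set (ℝ × (ℕ → Bool)), MeasurableSet S' ∧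
      (Prod.map id π) ⁻¹' S' = R k := by
    intro k
    have h := hmeasc k
    rw [hgen] at h
    exact hprodle _ h
  choose S' hS'm hS'eq using hexists
  set S : ℕ → Set (ℝ × (ℕ → Bool)) := fun k => ⋂ j ≤ k, S' j with hSdef
  have hSm : ∀ k, MeasurableSet (S k) := fun k =>
    MeasurableSet.biInter (to_countable _) (fun j _ => hS'm j)
  have hSanti : Antitone S := fun a b hab =>
    biInter_mono (fun j hj => le_trans hj hab) (fun j _ => Subset.rfl)
  have hSeq : ∀ k, (Prod.map id π) ⁻¹' (S k) = R k := by
    intro k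
    rw [hSdef]
    simp only [preimage_iInter₂]
    simp only [hS'eq]
    apply Subset.antisymm
    · intro p hp
      exact mem_iInter₂.1 hp k le_rfl
    · exact subset_iInter₂ (fun j hj => hanti hj)
  -- projections
  set A : ℕ → Set (ℕ → Bool) := fun k => Prod.snd '' S k with hAdef
  have hAan : ∀ k, AnalyticSet (A k) := fun k => (hSm k).analyticSet_image measurable_snd
  have hAanti : Antitone A := fun a b hab => image_mono (hSanti hab)
  have hproj : ∀ k, {y | ∃ t : ℝ, (t, y) ∈ R k} = π ⁻¹' (A k) := by
    intro k
    ext y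
    simp only [mem_setOf_eq, mem_preimage, hAdef]
    constructor
    · rintro ⟨t, ht⟩
      rw [← hSeq k] at ht
      exact ⟨(t, π y), ht, rfl⟩
    · rintro ⟨⟨t, z⟩, hz, hz2⟩
      refine ⟨t, ?_⟩
      rw [← hSeq k]
      show (t, π y) ∈ S k
      rwa [← hz2]
  -- the pushforward measure
  set μ : Measure (ℕ → Bool) := ν.map π with hμ
  haveI : IsFiniteMeasure μ := by
    constructor
    rw [hμ, Measure.map_apply hπm MeasurableSet.univ]
    exact measure_lt_top ν _
  haveI : PolishSpace (ℕ → Bool) := {}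
  have hANM : ∀ k, NullMeasurableSet (A k) μ := fun k => (hAan k).nullMeasurableSet μ
  have hinner : ∀ k, ∃ B ⊆ A k, MeasurableSet B ∧ B =ᵐ[μ] A k := fun k =>
    (hANM k).exists_measurable_subset_ae_eq
  choose B hBsub hBm hBae using hinner
  set B' : ℕ → Set (ℕ → Bool) := fun k => toMeasurable μ (A k) with hB'
  have hB'm : ∀ k, MeasurableSet (B' k) := fun k => measurableSet_toMeasurable μ _
  have hAB' : ∀ k, A k ⊆ B' k := fun k => subset_toMeasurable μ _
  set V : ℕ → Set (ℕ → Bool) := fun k => ⋂ j ≤ k, B' j with hV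
  have hVm : ∀ k, MeasurableSet (V k) := fun k =>
    MeasurableSet.biInter (to_countable _) (fun j _ => hB'm j)
  have hVanti : Antitone V := fun a b hab =>
    biInter_mono (fun j hj => le_trans hj hab) (fun j _ => Subset.rfl)
  have hAV : ∀ k, A k ⊆ V k := fun k =>
    subset_iInter₂ (fun j hj => (hAanti hj).trans (hAB' j))
  have hbound : ∀ k, ν {y | ∃ t : ℝ, (t, y) ∈ R k} ≤ μ (V k) := by
    intro k
    rw [hproj k, hμ, Measure.map_apply hπm (hVm k)]
    exact measure_mono (preimage_mono (hAV k))
  have hVint : (⋂ k, V k) = ⋂ j, B' j := by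
    ext z
    simp only [mem_iInter, hV]
    exact ⟨fun h j => h j j le_rfl, fun h k j _ => h j⟩
  have hdiffnull : ∀ j, μ (B' j \ B j) = 0 := by
    intro j
    have hBA : μ (B j) = μ (A j) := measure_congr (hBae j)
    have hB'A : μ (B' j) = μ (A j) := measure_toMeasurable _
    rw [measure_diff ((hBsub j).trans (hAB' j)) (hBm j).nullMeasurableSet (measure_ne_top μ _),
      hBA, hB'A, tsub_self]
  have hBint : μ (⋂ j, B j) = 0 := by
    have hsub : π ⁻¹' (⋂ j, B j) ⊆ {y | ∀ k, ∃ t : ℝ, (t, y) ∈ R k} := by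
      intro y hy
      intro k
      have : π y ∈ B k := mem_iInter.1 hy k
      have : π y ∈ A k := hBsub k this
      have : y ∈ π ⁻¹' (A k) := this
      rw [← hproj k] at this
      exact this
    have hm : MeasurableSet (⋂ j, B j) := MeasurableSet.iInter (fun j => hBm j)
    rw [hμ, Measure.map_apply hπm hm]
    exact measure_mono_null hsub hnull
  have hzero : μ (⋂ j, B' j) = 0 := by
    have hsub : (⋂ j, B' j) ⊆ (⋂ j, B j) ∪ ⋃ j, (B' j \ B j) := by
      intro z hz
      by_cases h : ∀ j, z ∈ B j
      · exact Or.inl (mem_iInter.2 h)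
      · push_neg at h
        obtain ⟨j, hj⟩ := h
        exact Or.inr (mem_iUnion.2 ⟨j, mem_iInter.1 hz j, hj⟩)
    refine le_antisymm (le_trans (measure_mono hsub) ?_) zero_le
    refine le_trans (measure_union_le _ _) ?_
    rw [hBint, measure_iUnion_null hdiffnull, add_zero]
  have htendV : Tendsto (fun k => μ (V k)) atTop (𝓝 0) := by
    have := tendsto_measure_iInter_atTop (μ := μ)
      (fun k => (hVm k).nullMeasurableSet) hVanti ⟨0, measure_ne_top μ _⟩
    rw [hVint, hzero] at this
    exact this
  exact tendsto_of_tendsto_of_tendsto_of_le_of_le tendsto_const_nhds htendV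
    (fun k => zero_le) hbound

end MakerAux


open MeasureTheory Filter Set Topology
open scoped ENNReal NNReal

namespace MakerAux

variable {X : Type*} [MeasurableSpace X] {θ : Measure X} {T : X → X}

local notation "S[" g ", " n "]" => fun x => ∑ i ∈ Finset.range n, g (T^[i] x)

/-- The maximal ergodic theorem (Garsia's proof). -/
theorem maximal_ergodic [IsProbabilityMeasure θ] (hT : MeasurePreserving T θ θ)
    {g : X → ℝ} (hgm : Measurable g) (hgi : Integrable g θ) :
    0 ≤ ∫ x in {x | ∃ n, 0 < ∑ i ∈ Finset.range n, g (T^[i] x)}, g x ∂θ := by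
  classical
  set S : ℕ → X → ℝ := fun n x => ∑ i ∈ Finset.range n, g (T^[i] x) with hS
  have hSmeas : ∀ n, Measurable (S n) := fun n =>
    Finset.measurable_sum _ (fun i _ => hgm.comp (hT.measurable.iterate i))
  have hSint : ∀ n, Integrable (S n) θ := fun n =>
    MeasureTheory.integrable_finset_sum _ (fun i _ =>
      ((hT.iterate i).integrable_comp hgi.aestronglyMeasurable).2 hgi)
  have hSsucc : ∀ n x, S (n + 1) x = S n (T x) + g x := by
    intro n x
    show (∑ i ∈ Finset.range (n + 1), g (T^[i] x)) = (∑ i ∈ Finset.range n, g (T^[i] (T x))) + g x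
    rw [Finset.sum_range_succ']
    simp only [Function.iterate_succ_apply, Function.iterate_zero_apply]
  -- the running maxima
  set Φ : ℕ → X → ℝ := fun N => Nat.rec (fun _ => (0 : ℝ))
    (fun k ih x => max (ih x) (S (k + 1) x)) N with hΦ
  have hΦ0 : Φ 0 = fun _ => (0 : ℝ) := rfl
  have hΦsucc : ∀ N, Φ (N + 1) = fun x => max (Φ N x) (S (N + 1) x) := fun _ => rfl
  have hΦmeas : ∀ N, Measurable (Φ N) := by
    intro N
    induction N with
    | zero => exact measurable_const
    | succ N ih => rw [hΦsucc]; exact ih.max (hSmeas _)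
  have hΦint : ∀ N, Integrable (Φ N) θ := by
    intro N
    induction N with
    | zero => rw [hΦ0]; exact integrable_const 0
    | succ N ih =>
      rw [hΦsucc]
      have := ih.sup (hSint (N + 1))
      exact this
  have hΦnonneg : ∀ N x, 0 ≤ Φ N x := by
    intro N x
    induction N with
    | zero => exact le_refl _
    | succ N ih => rw [hΦsucc]; exact le_trans ih (le_max_left _ _)
  have hSleΦ : ∀ N n, n ≤ N → ∀ x, S n x ≤ Φ N x := by
    intro N
    induction N with
    | zero =>
      intro n hn x
      interval_cases n
      simp [hΦ0, hS]
    | succ N ih =>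
      intro n hn x
      rcases Nat.lt_succ_iff_lt_or_eq.1 (Nat.lt_succ_of_le hn) with h | h
      · rw [hΦsucc]
        exact le_trans (ih n (by omega) x) (le_max_left _ _)
      · subst h
        rw [hΦsucc]
        exact le_max_right _ _
  have hΦle : ∀ N x (b : ℝ), (∀ n, n ≤ N → S n x ≤ b) → Φ N x ≤ b := by
    intro N
    induction N with
    | zero =>
      intro x b hb
      simpa [hΦ0, hS] using hb 0 (le_refl _)
    | succ N ih =>
      intro x b hb
      rw [hΦsucc]
      exact max_le (ih x b (fun n hn => hb n (by omega))) (hb (N + 1) (le_refl _))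
  have hkey : ∀ N x, Φ N x ≤ max 0 (g x + Φ N (T x)) := by
    intro N x
    apply hΦle
    intro n hn
    cases n with
    | zero =>
      have h0 : S 0 x = 0 := by simp [hS]
      rw [h0]; exact le_max_left _ _
    | succ m =>
      refine le_trans ?_ (le_max_right _ _)
      rw [hSsucc m x]
      have : S m (T x) ≤ Φ N (T x) := hSleΦ N m (by omega) (T x)
      linarith
  -- the increasing family of sets
  set A : ℕ → Set X := fun N => {x | 0 < Φ N x} with hA
  have hAmeas : ∀ N, MeasurableSet (A N) := fun N => measurableSet_lt measurable_const (hΦmeas N)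
  have hΦmono : ∀ x, Monotone (fun N => Φ N x) := by
    intro x
    apply monotone_nat_of_le_succ
    intro N
    rw [hΦsucc]
    exact le_max_left _ _
  have hAmono : Monotone A := by
    intro a b hab x hx
    have hx' : 0 < Φ a x := hx
    exact lt_of_lt_of_le hx' (hΦmono x hab)
  -- key integral inequality for each N
  have hIN : ∀ N, 0 ≤ ∫ x in A N, g x ∂θ := by
    intro N
    have hptwise : ∀ x ∈ A N, Φ N x - Φ N (T x) ≤ g x := by
      intro x hx
      have h1 := hkey N x
      rcases max_cases 0 (g x + Φ N (T x)) with ⟨he, _⟩ | ⟨he, _⟩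
      · rw [he] at h1
        have : (0 : ℝ) < Φ N x := hx
        linarith
      · rw [he] at h1
        linarith
    have hΦT_int : Integrable (fun x => Φ N (T x)) θ :=
      (hT.integrable_comp (hΦint N).aestronglyMeasurable).2 (hΦint N)
    have h2 : ∫ x in A N, (Φ N x - Φ N (T x)) ∂θ ≤ ∫ x in A N, g x ∂θ := by
      apply setIntegral_mono_on
      · exact ((hΦint N).sub hΦT_int).integrableOn
      · exact hgi.integrableOn
      · exact hAmeas N
      · exact hptwise
    have h3 : ∫ x in A N, (Φ N x - Φ N (T x)) ∂θ
        = ∫ x in A N, Φ N x ∂θ - ∫ x in A N, Φ N (T x) ∂θ :=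
      integral_sub (hΦint N).integrableOn hΦT_int.integrableOn
    have h4 : ∫ x in A N, Φ N x ∂θ = ∫ x, Φ N x ∂θ := by
      rw [← integral_add_compl (hAmeas N) (hΦint N)]
      have h5 : ∫ x in (A N)ᶜ, Φ N x ∂θ = 0 := by
        rw [setIntegral_congr_fun (hAmeas N).compl (g := fun _ => (0 : ℝ))]
        · exact integral_zero _ _
        · intro x hx
          simp only [hA, mem_compl_iff, mem_setOf_eq, not_lt] at hx
          exact le_antisymm hx (hΦnonneg N x)
      rw [h5, add_zero]
    have h6 : ∫ x in A N, Φ N (T x) ∂θ ≤ ∫ x, Φ N (T x) ∂θ :=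
      setIntegral_le_integral hΦT_int (Filter.Eventually.of_forall (fun x => hΦnonneg N (T x)))
    have h7 : ∫ x, Φ N (T x) ∂θ = ∫ x, Φ N x ∂θ := by
      have := integral_map (μ := θ) hT.measurable.aemeasurable
        (f := Φ N) ((hΦmeas N).aestronglyMeasurable (μ := θ.map T))
      rw [hT.map_eq] at this
      exact this.symm
    linarith
  -- pass to the limit
  have hAeq : (⋃ N, A N) = {x | ∃ n, 0 < ∑ i ∈ Finset.range n, g (T^[i] x)} := by
    ext x
    simp only [mem_iUnion, hA, mem_setOf_eq]
    constructor
    · rintro ⟨N, hN⟩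
      clear hAmono hIN
      induction N with
      | zero => simp [hΦ0] at hN
      | succ N ih =>
        rw [hΦsucc] at hN
        rcases lt_max_iff.1 hN with h | h
        · exact ih h
        · exact ⟨N + 1, h⟩
    · rintro ⟨n, hn⟩
      exact ⟨n, lt_of_lt_of_le hn (hSleΦ n n (le_refl _) x)⟩
  have := tendsto_setIntegral_of_monotone hAmeas hAmono (f := g) (by
    rw [hAeq]; exact hgi.integrableOn)
  rw [hAeq] at this
  exact ge_of_tendsto this (Filter.Eventually.of_forall hIN)

end MakerAux

namespace MakerAux2

open MakerAux

variable {X : Type*} [MeasurableSpace X] {θ : Measure X} {T : X → X}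

theorem birkhoff_upper [IsProbabilityMeasure θ] (hT : Ergodic T θ)
    {f : X → ℝ} (hfm : Measurable f) (hfi : Integrable f θ) {c : ℝ}
    (hc : ∫ y, f y ∂θ < c) :
    ∀ᵐ x ∂θ, ∀ᶠ n : ℕ in atTop, ∑ i ∈ Finset.range n, f (T^[i] x) < c * n := by
  classical
  set c' : ℝ := (∫ y, f y ∂θ + c) / 2 with hc'
  have hc'1 : ∫ y, f y ∂θ < c' := by rw [hc']; linarith
  have hc'2 : c' < c := by rw [hc']; linarith
  set g : X → ℝ := fun x => f x - c' with hg
  have hgm : Measurable g := hfm.sub measurable_const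
  have hgi : Integrable g θ := hfi.sub (integrable_const c')
  set Sg : ℕ → X → ℝ := fun n x => ∑ i ∈ Finset.range n, g (T^[i] x) with hSg
  have hSgm : ∀ n, Measurable (Sg n) := fun n =>
    Finset.measurable_sum _ (fun i _ => hgm.comp (hT.toMeasurePreserving.measurable.iterate i))
  have hSgsucc : ∀ n x, Sg (n + 1) x = Sg n (T x) + g x := by
    intro n x
    show (∑ i ∈ Finset.range (n + 1), g (T^[i] x))
      = (∑ i ∈ Finset.range n, g (T^[i] (T x))) + g x
    rw [Finset.sum_range_succ']
    simp only [Function.iterate_succ_apply, Function.iterate_zero_apply]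
  have hSg0 : ∀ x, Sg 0 x = 0 := fun x => by simp [hSg]
  set E : Set X := ⋂ m : ℕ, ⋃ n : ℕ, {x | (m : ℝ) < Sg n x} with hE
  have hEmem : ∀ x, x ∈ E ↔ ∀ m : ℕ, ∃ n : ℕ, (m : ℝ) < Sg n x := by
    intro x
    simp only [hE, mem_iInter, mem_iUnion, mem_setOf_eq]
  have hEmeas : MeasurableSet E := by
    apply MeasurableSet.iInter
    intro m
    apply MeasurableSet.iUnion
    intro n
    exact measurableSet_lt measurable_const (hSgm n)
  have hEinv : T ⁻¹' E = E := by
    ext x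
    rw [mem_preimage, hEmem, hEmem]
    constructor
    · intro h m
      obtain ⟨m', hm'⟩ := exists_nat_ge ((m : ℝ) - g x)
      obtain ⟨n, hn⟩ := h m'
      refine ⟨n + 1, ?_⟩
      rw [hSgsucc]
      linarith
    · intro h m
      obtain ⟨m', hm'⟩ := exists_nat_ge ((m : ℝ) + g x)
      obtain ⟨k, hk⟩ := h m'
      cases k with
      | zero =>
        rw [hSg0] at hk
        have : (0 : ℝ) ≤ (m' : ℝ) := Nat.cast_nonneg _
        linarith
      | succ k' =>
        rw [hSgsucc] at hk
        exact ⟨k', by linarith⟩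
  have hstep : ∀ x, T x ∈ E ↔ x ∈ E := fun x => by
    rw [← mem_preimage, hEinv]
  have hEiter : ∀ (i : ℕ) (x : X), T^[i] x ∈ E ↔ x ∈ E := by
    intro i
    induction i with
    | zero => intro x; rfl
    | succ i ih =>
      intro x
      rw [Function.iterate_succ_apply]
      rw [ih (T x)]
      exact hstep x
  -- apply the maximal ergodic theorem to the indicator-restricted function
  set gt : X → ℝ := E.indicator g with hgt
  have hgtm : Measurable gt := hgm.indicator hEmeas
  have hgti : Integrable gt θ := hgi.indicator hEmeas
  have hsum_ind : ∀ n x, (∑ i ∈ Finset.range n, gt (T^[i] x))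
      = if x ∈ E then Sg n x else 0 := by
    intro n x
    by_cases hx : x ∈ E
    · rw [if_pos hx]
      apply Finset.sum_congr rfl
      intro i _
      rw [hgt, indicator_of_mem ((hEiter i x).2 hx)]
    · rw [if_neg hx]
      rw [Finset.sum_eq_zero]
      intro i _
      rw [hgt, indicator_of_notMem (fun hmem => hx ((hEiter i x).1 hmem))]
  have hAE : {x | ∃ n, 0 < ∑ i ∈ Finset.range n, gt (T^[i] x)} = E := by
    ext x
    simp only [mem_setOf_eq, hsum_ind]
    by_cases hx : x ∈ E
    · simp only [if_pos hx]
      refine ⟨fun _ => hx, fun _ => ?_⟩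
      obtain ⟨n, hn⟩ := (hEmem x).1 hx 0
      exact ⟨n, by exact_mod_cast lt_of_le_of_lt (by norm_num) hn⟩
    · simp only [if_neg hx]
      exact ⟨fun ⟨n, hn⟩ => absurd hn (lt_irrefl 0), fun h => absurd h hx⟩
  have hmax := maximal_ergodic hT.toMeasurePreserving hgtm hgti
  rw [hAE] at hmax
  have hEint : ∫ x in E, gt x ∂θ = ∫ x in E, g x ∂θ :=
    setIntegral_congr_fun hEmeas (fun x hx => indicator_of_mem hx g)
  rw [hEint] at hmax
  -- ergodicity: E has measure 0 or 1
  rcases hT.measure_self_or_compl_eq_zero hEmeas hEinv with hE0 | hE1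
  · -- θ E = 0 : conclusion
    have hae : ∀ᵐ x ∂θ, x ∉ E := by
      rw [ae_iff]
      simpa using hE0
    filter_upwards [hae] with x hx
    rw [hEmem] at hx
    push_neg at hx
    obtain ⟨m, hm⟩ := hx
    have hpos : (0 : ℝ) < c - c' := by linarith
    have hev : ∀ᶠ n : ℕ in atTop, (m : ℝ) < n * (c - c') := by
      have h1 : Tendsto (fun n : ℕ => (n : ℝ) * (c - c')) atTop atTop :=
        Tendsto.atTop_mul_const hpos tendsto_natCast_atTop_atTop
      exact h1.eventually_gt_atTop (m : ℝ)
    filter_upwards [hev] with n hn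
    have hdecomp : Sg n x = (∑ i ∈ Finset.range n, f (T^[i] x)) - n * c' := by
      rw [hSg]
      simp only [hg]
      rw [Finset.sum_sub_distrib, Finset.sum_const, Finset.card_range, nsmul_eq_mul]
    have hmn := hm n
    have hcomm : (n : ℝ) * c = c * n := mul_comm _ _
    rw [hdecomp] at hmn
    nlinarith
  · -- θ Eᶜ = 0 : contradiction
    exfalso
    have hfull : ∫ x in E, g x ∂θ = ∫ x, g x ∂θ := by
      have hz : ∫ x in Eᶜ, g x ∂θ = 0 := by
        rw [Measure.restrict_eq_zero.2 hE1, integral_zero_measure]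
      rw [← integral_add_compl hEmeas hgi, hz, add_zero]
    have hint : ∫ x, g x ∂θ = ∫ y, f y ∂θ - c' := by
      rw [hg]
      rw [integral_sub hfi (integrable_const c')]
      simp
    rw [hfull, hint] at hmax
    linarith


end MakerAux2

namespace MakerAux2

variable {X : Type*} [MeasurableSpace X] {θ : Measure X} {T : X → X}

/-- Birkhoff's pointwise ergodic theorem for an ergodic transformation. -/
theorem birkhoff [IsProbabilityMeasure θ] (hT : Ergodic T θ)
    {f : X → ℝ} (hfm : Measurable f) (hfi : Integrable f θ) :
    ∀ᵐ x ∂θ, Tendsto (fun n : ℕ => (n : ℝ)⁻¹ * ∑ i ∈ Finset.range n, f (T^[i] x))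
      atTop (𝓝 (∫ y, f y ∂θ)) := by
  have hub : ∀ᵐ x ∂θ, ∀ q : ℚ, (∫ y, f y ∂θ < q) →
      ∀ᶠ n : ℕ in atTop, (∑ i ∈ Finset.range n, f (T^[i] x)) < q * n := by
    rw [ae_all_iff]
    intro q
    by_cases hq : ∫ y, f y ∂θ < q
    · filter_upwards [birkhoff_upper hT hfm hfi hq] with x hx _ using hx
    · filter_upwards with x hq' using absurd hq' hq
  have hlb : ∀ᵐ x ∂θ, ∀ q : ℚ, ((q : ℝ) < ∫ y, f y ∂θ) →
      ∀ᶠ n : ℕ in atTop, (q : ℝ) * n < ∑ i ∈ Finset.range n, f (T^[i] x) := by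
    rw [ae_all_iff]
    intro q
    by_cases hq : (q : ℝ) < ∫ y, f y ∂θ
    · have hneg : ∫ y, (fun z => -f z) y ∂θ < (-q : ℝ) := by
        rw [integral_neg]; linarith
      filter_upwards [birkhoff_upper hT hfm.neg hfi.neg hneg] with x hx _
      filter_upwards [hx] with n hn
      have hs : (∑ i ∈ Finset.range n, -f (T^[i] x)) = -∑ i ∈ Finset.range n, f (T^[i] x) := by
        simp
      simp only [Pi.neg_apply] at hn
      rw [hs] at hn
      have : (-q : ℝ) * n = -((q : ℝ) * n) := by ring
      rw [this] at hn
      linarith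
    · filter_upwards with x hq' using absurd hq' hq
  filter_upwards [hub, hlb] with x hu hl
  rw [tendsto_order]
  constructor
  · intro a ha
    obtain ⟨q, hq1, hq2⟩ := exists_rat_btwn ha
    filter_upwards [hl q hq2, eventually_ge_atTop 1] with n hn hn1
    have hn0 : (0 : ℝ) < n := by exact_mod_cast hn1
    rw [inv_mul_eq_div, lt_div_iff₀ hn0]
    nlinarith
  · intro b hb
    obtain ⟨q, hq1, hq2⟩ := exists_rat_btwn hb
    filter_upwards [hu q hq1, eventually_ge_atTop 1] with n hn hn1
    have hn0 : (0 : ℝ) < n := by exact_mod_cast hn1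
    rw [inv_mul_eq_div, div_lt_iff₀ hn0]
    nlinarith

end MakerAux2

namespace MakerAux3

open Filter MeasureTheory

variable {X : Type*} [MeasurableSpace X] {θ : MeasureTheory.Measure X} {T : X → X}

theorem sum_Icc_one (a : ℕ → ℝ) (N : ℕ) :
    ∑ n ∈ Finset.Icc 1 N, a n = (∑ i ∈ Finset.range (N + 1), a i) - a 0 := by
  rw [Finset.sum_range_succ']
  have h1 : Finset.Icc 1 N = Finset.Ico 1 (N + 1) := by
    rw [Finset.Ico_add_one_right_eq_Icc]
  rw [h1, Finset.sum_Ico_eq_sum_range]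
  simp only [Nat.add_sub_cancel, add_comm 1]
  ring

theorem tendsto_inv_nat : Tendsto (fun N : ℕ => (N : ℝ)⁻¹) atTop (𝓝 0) :=
  tendsto_inv_atTop_nhds_zero_nat

theorem avg_shift {a : ℕ → ℝ} {L : ℝ}
    (h : Tendsto (fun n : ℕ => (n : ℝ)⁻¹ * ∑ i ∈ Finset.range n, a i) atTop (𝓝 L)) :
    Tendsto (fun N : ℕ => (N : ℝ)⁻¹ * ∑ n ∈ Finset.Icc 1 N, a n) atTop (𝓝 L) := by
  have hcomp : Tendsto (fun N : ℕ => ((N + 1 : ℕ) : ℝ)⁻¹ * ∑ i ∈ Finset.range (N + 1), a i)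
      atTop (𝓝 L) := h.comp (tendsto_add_atTop_nat 1)
  have h1 : Tendsto (fun N : ℕ => (1 + (N : ℝ)⁻¹)) atTop (𝓝 1) := by
    simpa using tendsto_const_nhds.add tendsto_inv_nat
  have hprod : Tendsto (fun N : ℕ =>
      (1 + (N : ℝ)⁻¹) * (((N + 1 : ℕ) : ℝ)⁻¹ * ∑ i ∈ Finset.range (N + 1), a i)
        - (N : ℝ)⁻¹ * a 0) atTop (𝓝 (1 * L - 0 * a 0)) :=
    (h1.mul hcomp).sub (tendsto_inv_nat.mul tendsto_const_nhds)
  rw [show (1 : ℝ) * L - 0 * a 0 = L by ring] at hprod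
  apply hprod.congr'
  filter_upwards [eventually_ge_atTop 1] with N hN
  have hN0 : (N : ℝ) ≠ 0 := by
    have : (0 : ℝ) < N := by exact_mod_cast hN
    exact this.ne'
  have hN1 : ((N + 1 : ℕ) : ℝ) ≠ 0 := by positivity
  rw [sum_Icc_one]
  push_cast
  field_simp

theorem ae_forall_iterate {P : X → Prop} (hT : MeasurePreserving T θ θ)
    (h : ∀ᵐ y ∂θ, P y) : ∀ᵐ x ∂θ, ∀ n : ℕ, P (T^[n] x) := by
  rw [ae_iff] at h
  rw [ae_iff]
  have hsub : {x | ¬∀ n : ℕ, P (T^[n] x)} ⊆ ⋃ n : ℕ, T^[n] ⁻¹' (toMeasurable θ {y | ¬P y}) := by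
    intro x hx
    simp only [Set.mem_setOf_eq, not_forall] at hx
    obtain ⟨n, hn⟩ := hx
    exact Set.mem_iUnion.2 ⟨n, subset_toMeasurable θ _ hn⟩
  refine measure_mono_null hsub (measure_iUnion_null (fun n => ?_))
  rw [(hT.iterate n).measure_preimage (measurableSet_toMeasurable θ _).nullMeasurableSet]
  rw [measure_toMeasurable]
  exact h

end MakerAux3


set_option maxHeartbeats 2000000 in
/-- A variant of Maker's ergodic theorem. Let `(X, θ, T)` be an ergodic
measure-preserving system, `(G_t)` a measurable family with `sup_t |G_t|` dominated by an
integrable function and `G_t → Glim` pointwise a.e. as `t → 0`. If `t_{N,n} : X → ℝ`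
satisfies: a.e. `x`, for every `ε > 0`, for large `N`, `|t_{N,n}(x)| < ε` for all
`1 ≤ n ≤ (1−ε)N`, then `(1/N) Σ_{n=1}^N G_{t_{N,n}(x)}(Tⁿx) → ∫ Glim dθ` a.e. -/
theorem maker_ergodic_theorem_variant
    {X : Type*} [MeasurableSpace X] (θ : Measure X) [IsProbabilityMeasure θ]
    (T : X → X) (hT : Ergodic T θ)
    (G : ℝ → X → ℝ) (Glim : X → ℝ)
    (hmeas : Measurable (Function.uncurry G))
    (bound : X → ℝ) (hbound : Integrable bound θ)
    (hdom : ∀ t x, |G t x| ≤ bound x)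
    (hGlim : ∀ᵐ x ∂θ, Tendsto (fun t => G t x) (nhds 0) (nhds (Glim x)))
    (tN : ℕ → ℕ → X → ℝ)
    (htN : ∀ᵐ x ∂θ, ∀ ε > (0 : ℝ), ∀ᶠ N : ℕ in atTop,
      ∀ n : ℕ, 1 ≤ n → (n : ℝ) ≤ (1 - ε) * N → |tN N n x| < ε) :
    ∀ᵐ x ∂θ, Tendsto
      (fun N : ℕ => (1 / N : ℝ) * ∑ n ∈ Finset.Icc 1 N, G (tN N n x) (T^[n] x))
      atTop (nhds (∫ y, Glim y ∂θ)) := by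
  classical
  have hTm : Measurable T := hT.toMeasurePreserving.measurable
  have hGt : ∀ t : ℝ, Measurable (G t) := fun t =>
    hmeas.comp (measurable_const.prodMk measurable_id)
  -- measurable version of Glim
  have hseq0 : Tendsto (fun j : ℕ => ((j : ℝ) + 1)⁻¹) atTop (nhds 0) := by
    have := MakerAux3.tendsto_inv_nat.comp (tendsto_add_atTop_nat 1)
    refine this.congr (fun j => ?_)
    simp [Function.comp]
  have hGlimae : AEMeasurable Glim θ := by
    apply aemeasurable_of_tendsto_metrizable_ae' (f := fun j : ℕ => fun x => G ((j : ℝ) + 1)⁻¹ x)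
    · exact fun j => (hGt _).aemeasurable
    · filter_upwards [hGlim] with x hx
      exact hx.comp hseq0
  obtain ⟨f₀, hf₀m, hf₀e⟩ : ∃ f₀ : X → ℝ, Measurable f₀ ∧ Glim =ᵐ[θ] f₀ :=
    ⟨hGlimae.mk Glim, hGlimae.measurable_mk, hGlimae.ae_eq_mk⟩
  obtain ⟨M₀, hM₀m, hM₀e⟩ : ∃ M₀ : X → ℝ, Measurable M₀ ∧ bound =ᵐ[θ] M₀ :=
    ⟨hbound.1.mk bound, hbound.1.stronglyMeasurable_mk.measurable, hbound.1.ae_eq_mk⟩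
  have hboundnn : ∀ y, 0 ≤ bound y := fun y => (abs_nonneg _).trans (hdom 0 y)
  have hGlimle : ∀ᵐ x ∂θ, |Glim x| ≤ bound x := by
    filter_upwards [hGlim] with x hx
    exact le_of_tendsto hx.abs (Eventually.of_forall fun t => hdom t x)
  have hGlimint : Integrable Glim θ := by
    refine Integrable.mono hbound hGlimae.aestronglyMeasurable ?_
    filter_upwards [hGlimle] with x hx
    rw [Real.norm_eq_abs, Real.norm_eq_abs, abs_of_nonneg (hboundnn x)]
    exact hx
  have hf₀int : Integrable f₀ θ := hGlimint.congr hf₀e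
  set u : X → ℝ := fun y => |M₀ y| + |f₀ y| with hu
  have hum : Measurable u := hM₀m.abs.add hf₀m.abs
  have huint : Integrable u θ := ((hbound.congr hM₀e).abs).add hf₀int.abs
  have hunn : ∀ y, 0 ≤ u y := fun y => add_nonneg (abs_nonneg _) (abs_nonneg _)
  have hudom : ∀ᵐ y ∂θ, ∀ t : ℝ, |G t y - f₀ y| ≤ u y := by
    filter_upwards [hM₀e, hf₀e] with y h1 h2
    intro t
    calc |G t y - f₀ y| ≤ |G t y| + |f₀ y| := abs_sub _ _
      _ ≤ bound y + |f₀ y| := by gcongr; exact hdom t y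
      _ ≤ |M₀ y| + |f₀ y| := by
          gcongr
          rw [h1]
          exact le_abs_self _
  -- the reference measure with density u + 1
  set ν : Measure X := θ.withDensity (fun y => ENNReal.ofReal (u y) + 1) with hν
  haveI hνfin : IsFiniteMeasure ν := by
    constructor
    rw [hν, withDensity_apply _ MeasurableSet.univ, Measure.restrict_univ,
      lintegral_add_right _ measurable_const]
    have h1 : ∫⁻ y, ENNReal.ofReal (u y) ∂θ < ⊤ := huint.lintegral_lt_top
    have h2 : ∫⁻ _ : X, (1 : ℝ≥0∞) ∂θ < ⊤ := by
      rw [lintegral_one]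
      exact measure_lt_top θ _
    exact ENNReal.add_lt_top.2 ⟨h1, h2⟩
  have hac : ν ≪ θ := withDensity_absolutelyContinuous θ _
  -- the exceptional rectangles
  set R : ℕ → ℕ → Set (ℝ × X) := fun m k =>
    {p : ℝ × X | |p.1| ≤ ((k : ℝ) + 1)⁻¹} ∩
      {p : ℝ × X | ((m : ℝ) + 1)⁻¹ ≤ |Function.uncurry G p - f₀ p.2|} with hR
  have hRmeas : ∀ m k, MeasurableSet (R m k) := by
    intro m k
    apply MeasurableSet.inter
    · exact measurableSet_le (measurable_fst.abs) measurable_const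
    · exact measurableSet_le measurable_const ((hmeas.sub (hf₀m.comp measurable_snd)).abs)
  have hRanti : ∀ m, Antitone (R m) := by
    intro m a b hab p hp
    obtain ⟨h1, h2⟩ := hp
    have h1' : |p.1| ≤ ((b : ℝ) + 1)⁻¹ := h1
    constructor
    · show |p.1| ≤ ((a : ℝ) + 1)⁻¹
      refine le_trans h1' ?_
      have hcast : (a : ℝ) ≤ (b : ℝ) := by exact_mod_cast hab
      have h2' : (0:ℝ) < (a : ℝ) + 1 := by positivity
      have h3' : (a : ℝ) + 1 ≤ (b : ℝ) + 1 := by linarith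
      rw [inv_le_inv₀ (by positivity) h2']
      exact h3'
    · exact h2
  -- the bad sections are null
  have hbadnull : ∀ m : ℕ, ν {y | ∀ k : ℕ, ∃ t : ℝ, (t, y) ∈ R m k} = 0 := by
    intro m
    have hae : ∀ᵐ y ∂θ, ¬(∀ k : ℕ, ∃ t : ℝ, (t, y) ∈ R m k) := by
      filter_upwards [hGlim, hf₀e] with y hy he
      intro hcon
      have hball : ∀ᶠ t in nhds (0 : ℝ), |G t y - f₀ y| < ((m : ℝ) + 1)⁻¹ := by
        have hmem := hy (Metric.ball_mem_nhds (Glim y) (show (0:ℝ) < ((m:ℝ)+1)⁻¹ by positivity))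
        filter_upwards [hmem] with t ht
        rw [Set.mem_preimage, Metric.mem_ball, Real.dist_eq] at ht
        rw [← he]
        exact ht
      obtain ⟨ε, hε, hball'⟩ := Metric.eventually_nhds_iff_ball.1 hball
      obtain ⟨k, hk⟩ := exists_nat_one_div_lt hε
      obtain ⟨t, ht1, ht2⟩ := hcon k
      have htε : |t| < ε := by
        refine lt_of_le_of_lt ht1 ?_
        rw [one_div] at hk
        exact_mod_cast hk
      have := hball' t (by rw [Metric.mem_ball, Real.dist_eq, sub_zero]; exact htε)
      have h2' := ht2
      simp only [Set.mem_setOf_eq, Function.uncurry] at h2'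
      linarith
    have hν0 := hae.filter_mono hac.ae_le
    rw [ae_iff] at hν0
    simpa using hν0
  have hproj : ∀ m : ℕ, Tendsto (fun k => ν {y | ∃ t : ℝ, (t, y) ∈ R m k}) atTop (nhds 0) :=
    fun m => MakerAux.proj_tendsto_zero ν (R m) (hRmeas m) (hRanti m) (hbadnull m)
  set H : ℕ → ℕ → Set X := fun m k => toMeasurable ν {y | ∃ t : ℝ, (t, y) ∈ R m k} with hH
  have hHmeas : ∀ m k, MeasurableSet (H m k) := fun m k => measurableSet_toMeasurable ν _
  set w : ℕ → ℕ → X → ℝ := fun m k => (H m k).indicator u with hw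
  have hwm : ∀ m k, Measurable (w m k) := fun m k => hum.indicator (hHmeas m k)
  have hwint : ∀ m k, Integrable (w m k) θ := fun m k => huint.indicator (hHmeas m k)
  have hwnn : ∀ m k y, 0 ≤ w m k y := fun m k y =>
    Set.indicator_nonneg (fun z _ => hunn z) y
  set c : ℕ → ℕ → ℝ := fun m k => ∫ y, w m k y ∂θ with hc
  have hcnn : ∀ m k, 0 ≤ c m k := fun m k => integral_nonneg (hwnn m k)
  have hcle : ∀ m k, c m k ≤ (ν (H m k)).toReal := by
    intro m k
    rw [hc]
    simp only
    rw [hw]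
    simp only
    rw [integral_indicator (hHmeas m k),
      integral_eq_lintegral_of_nonneg_ae (Eventually.of_forall fun y => hunn y)
        hum.aestronglyMeasurable.restrict]
    have h1 : ∫⁻ y in H m k, ENNReal.ofReal (u y) ∂θ ≤ ν (H m k) := by
      rw [hν, withDensity_apply _ (hHmeas m k)]
      exact lintegral_mono (fun y => le_self_add)
    exact ENNReal.toReal_mono (measure_ne_top ν _) h1
  have hctend : ∀ m, Tendsto (fun k => c m k) atTop (nhds 0) := by
    intro m
    have h2 : Tendsto (fun k => ν (H m k)) atTop (nhds 0) :=
      (hproj m).congr (fun k => (measure_toMeasurable _).symm)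
    have h3 : Tendsto (fun k => (ν (H m k)).toReal) atTop (nhds 0) := by
      have h4 := (ENNReal.tendsto_toReal ENNReal.zero_ne_top).comp h2
      exact h4
    exact squeeze_zero (fun k => hcnn m k) (fun k => hcle m k) h3
  -- pointwise domination
  have hpt : ∀ᵐ y ∂θ, ∀ (m k : ℕ) (t : ℝ), |t| ≤ ((k : ℝ) + 1)⁻¹ →
      |G t y - f₀ y| ≤ ((m : ℝ) + 1)⁻¹ + w m k y := by
    filter_upwards [hudom] with y hy
    intro m k t ht
    by_cases hcase : ((m : ℝ) + 1)⁻¹ ≤ |G t y - f₀ y|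
    · have hmem : y ∈ H m k := subset_toMeasurable ν _ ⟨t, ht, hcase⟩
      have hwu : w m k y = u y := Set.indicator_of_mem hmem u
      rw [hwu]
      have h1 := hy t
      have hm0 : (0 : ℝ) ≤ ((m : ℝ) + 1)⁻¹ := by positivity
      calc |G t y - f₀ y| ≤ u y := h1
        _ ≤ ((m : ℝ) + 1)⁻¹ + u y := by linarith
    · push_neg at hcase
      have := hwnn m k y
      linarith
  -- Birkhoff limits
  set I : ℝ := ∫ y, f₀ y ∂θ with hI
  set U : ℝ := ∫ y, u y ∂θ with hU
  have hIeq : ∫ y, Glim y ∂θ = I := integral_congr_ae hf₀e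
  have hUnn : 0 ≤ U := integral_nonneg hunn
  have hB0 := MakerAux2.birkhoff hT hf₀m hf₀int
  have hBu := MakerAux2.birkhoff hT hum huint
  have hBw : ∀ᵐ x ∂θ, ∀ m k : ℕ, Tendsto
      (fun n : ℕ => (n : ℝ)⁻¹ * ∑ i ∈ Finset.range n, w m k (T^[i] x)) atTop (nhds (c m k)) := by
    rw [ae_all_iff]
    intro m
    rw [ae_all_iff]
    intro k
    exact MakerAux2.birkhoff hT (hwm m k) (hwint m k)
  have horb1 := MakerAux3.ae_forall_iterate hT.toMeasurePreserving hpt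
  have horb2 := MakerAux3.ae_forall_iterate hT.toMeasurePreserving hudom
  rw [hIeq]
  filter_upwards [hB0, hBu, hBw, horb1, horb2, htN] with x hB0x hBux hBwx h1x h2x htNx
  have hA : Tendsto (fun N : ℕ => (N : ℝ)⁻¹ * ∑ n ∈ Finset.Icc 1 N, f₀ (T^[n] x))
      atTop (nhds I) := MakerAux3.avg_shift hB0x
  set D : ℕ → ℝ := fun N => (N : ℝ)⁻¹ * ∑ n ∈ Finset.Icc 1 N,
    (G (tN N n x) (T^[n] x) - f₀ (T^[n] x)) with hD
  have hDglue : ∀ N : ℕ, (1 / (N : ℝ)) * ∑ n ∈ Finset.Icc 1 N, G (tN N n x) (T^[n] x)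
      = D N + (N : ℝ)⁻¹ * ∑ n ∈ Finset.Icc 1 N, f₀ (T^[n] x) := by
    intro N
    rw [hD]
    simp only
    rw [one_div, ← mul_add, Finset.sum_sub_distrib, sub_add_cancel]
  suffices hDlim : Tendsto D atTop (nhds 0) by
    have hsum := hDlim.add hA
    rw [zero_add] at hsum
    exact hsum.congr (fun N => (hDglue N).symm)
  rw [NormedAddCommGroup.tendsto_nhds_zero]
  intro ε hε
  obtain ⟨m, hm⟩ := exists_nat_one_div_lt (show (0:ℝ) < ε/4 by linarith)
  have hm' : ((m : ℝ) + 1)⁻¹ < ε/4 := by rw [← one_div]; exact_mod_cast hm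
  have hev1 : ∀ᶠ k : ℕ in atTop, c m k < ε/4 := (hctend m).eventually_lt_const (by linarith)
  have hseqU : Tendsto (fun k : ℕ => ((k : ℝ) + 1)⁻¹ * (U + 1)) atTop (nhds 0) := by
    simpa using hseq0.mul_const (U + 1)
  have hev2 : ∀ᶠ k : ℕ in atTop, ((k : ℝ) + 1)⁻¹ * (U + 1) < ε/8 :=
    hseqU.eventually_lt_const (by linarith)
  obtain ⟨k, hk1, hk2, hk3⟩ := (hev1.and (hev2.and (eventually_ge_atTop 1))).exists
  set δ : ℝ := ((k : ℝ) + 1)⁻¹ with hδd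
  have hδpos : 0 < δ := by rw [hδd]; positivity
  have hδle : δ ≤ 1/2 := by
    rw [hδd]
    have h2k : (2 : ℝ) ≤ (k : ℝ) + 1 := by
      have h1k : (1 : ℝ) ≤ (k : ℝ) := by exact_mod_cast hk3
      linarith
    rw [show (1/2 : ℝ) = (2 : ℝ)⁻¹ by norm_num, inv_le_inv₀ (by positivity) (by norm_num)]
    exact h2k
  have hδlt1 : δ < 1 := by linarith
  have h1δ : 0 < 1 - δ := by linarith
  have hδU : δ * (U + 1) < ε/8 := hk2
  have hevN := htNx δ hδpos
  set n₀ : ℕ → ℕ := fun N => ⌊(1 - δ) * (N : ℝ)⌋₊ with hn₀d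
  have hn₀le : ∀ N : ℕ, ((n₀ N : ℝ)) ≤ (1 - δ) * N := fun N => Nat.floor_le (by positivity)
  have hn₀leN : ∀ N : ℕ, n₀ N ≤ N := by
    intro N
    have h1 := hn₀le N
    have h2 : (1 - δ) * (N : ℝ) ≤ N := by nlinarith [(by positivity : (0:ℝ) ≤ (N:ℝ))]
    exact_mod_cast le_trans h1 h2
  have hn₀inf : Tendsto n₀ atTop atTop := by
    have h1 : Tendsto (fun N : ℕ => (1 - δ) * (N : ℝ)) atTop atTop :=
      (tendsto_natCast_atTop_atTop).const_mul_atTop h1δ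
    exact (tendsto_nat_floor_atTop (α := ℝ)).comp h1
  have hratio : Tendsto (fun N : ℕ => (n₀ N : ℝ) * (N : ℝ)⁻¹) atTop (nhds (1 - δ)) := by
    have hlow : Tendsto (fun N : ℕ => (1 - δ) - (N : ℝ)⁻¹) atTop (nhds (1 - δ)) := by
      simpa using tendsto_const_nhds.sub MakerAux3.tendsto_inv_nat
    apply tendsto_of_tendsto_of_tendsto_of_le_of_le' hlow tendsto_const_nhds
    · filter_upwards [eventually_ge_atTop 1] with N hN
      have hN0 : (0:ℝ) < N := by exact_mod_cast hN
      have hfl := (Nat.sub_one_lt_floor ((1 - δ) * N)).le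
      have heq : (1 - δ) - (N : ℝ)⁻¹ = ((1 - δ) * N - 1) * (N : ℝ)⁻¹ := by field_simp
      rw [heq]
      exact mul_le_mul_of_nonneg_right hfl (inv_nonneg.2 hN0.le)
    · filter_upwards [eventually_ge_atTop 1] with N hN
      have hN0 : (0:ℝ) < N := by exact_mod_cast hN
      have heq : (1 - δ) = ((1 - δ) * N) * (N : ℝ)⁻¹ := by field_simp
      rw [heq]
      exact mul_le_mul_of_nonneg_right (hn₀le N) (inv_nonneg.2 hN0.le)
  have hCu : Tendsto (fun N : ℕ => (N : ℝ)⁻¹ * ∑ n ∈ Finset.Icc 1 (n₀ N), u (T^[n] x))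
      atTop (nhds ((1 - δ) * U)) := by
    have havg : Tendsto (fun j : ℕ => (j : ℝ)⁻¹ * ∑ n ∈ Finset.Icc 1 j, u (T^[n] x))
        atTop (nhds U) := MakerAux3.avg_shift hBux
    have hcomp : Tendsto (fun N : ℕ => ((n₀ N : ℝ))⁻¹ * ∑ n ∈ Finset.Icc 1 (n₀ N), u (T^[n] x))
        atTop (nhds U) := havg.comp hn₀inf
    apply (hratio.mul hcomp).congr'
    filter_upwards [hn₀inf.eventually_ge_atTop 1, eventually_ge_atTop 1] with N hN hN'
    have h0 : ((n₀ N : ℝ)) ≠ 0 := by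
      have : (0:ℝ) < (n₀ N : ℝ) := by exact_mod_cast hN
      exact this.ne'
    field_simp
  have hAu : Tendsto (fun N : ℕ => (N : ℝ)⁻¹ * ∑ n ∈ Finset.Icc 1 N, u (T^[n] x))
      atTop (nhds U) := MakerAux3.avg_shift hBux
  have htail := hAu.sub hCu
  have htlim : U - (1 - δ) * U < ε/4 := by nlinarith
  have hevtail : ∀ᶠ N : ℕ in atTop, (N : ℝ)⁻¹ * ∑ n ∈ Finset.Icc 1 N, u (T^[n] x)
      - (N : ℝ)⁻¹ * ∑ n ∈ Finset.Icc 1 (n₀ N), u (T^[n] x) < ε/4 :=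
    htail.eventually_lt_const htlim
  have hevw : ∀ᶠ N : ℕ in atTop, (N : ℝ)⁻¹ * ∑ n ∈ Finset.Icc 1 N, w m k (T^[n] x) < ε/4 :=
    (MakerAux3.avg_shift (hBwx m k)).eventually_lt_const hk1
  filter_upwards [hevN, hevtail, hevw, eventually_ge_atTop 1] with N hNt hNtail hNw hN1
  have hN0 : (0:ℝ) < N := by exact_mod_cast hN1
  have hinv0 : (0:ℝ) ≤ (N : ℝ)⁻¹ := by positivity
  rw [Real.norm_eq_abs]
  set a : ℕ → ℝ := fun n => |G (tN N n x) (T^[n] x) - f₀ (T^[n] x)| with had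
  have hIccIoc : ∀ j : ℕ, Finset.Icc 1 j = Finset.Ioc 0 j := fun j => Finset.Icc_add_one_left_eq_Ioc 0 j
  have hhead : ∑ n ∈ Finset.Ioc 0 (n₀ N), a n ≤
      (n₀ N : ℝ) * ((m : ℝ) + 1)⁻¹ + ∑ n ∈ Finset.Ioc 0 (n₀ N), w m k (T^[n] x) := by
    have hsum : ∑ n ∈ Finset.Ioc 0 (n₀ N), a n ≤
        ∑ n ∈ Finset.Ioc 0 (n₀ N), (((m : ℝ) + 1)⁻¹ + w m k (T^[n] x)) := by
      apply Finset.sum_le_sum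
      intro n hn
      rw [Finset.mem_Ioc] at hn
      have hn1 : 1 ≤ n := hn.1
      have hnr : (n : ℝ) ≤ (1 - δ) * N :=
        le_trans (by exact_mod_cast hn.2 : (n : ℝ) ≤ (n₀ N : ℝ)) (hn₀le N)
      have htsmall : |tN N n x| < δ := hNt n hn1 hnr
      exact h1x n m k (tN N n x) (le_of_lt htsmall)
    refine le_trans hsum ?_
    rw [Finset.sum_add_distrib, Finset.sum_const, Nat.card_Ioc, Nat.sub_zero, nsmul_eq_mul]
  have htailb : ∑ n ∈ Finset.Ioc (n₀ N) N, a n ≤ ∑ n ∈ Finset.Ioc (n₀ N) N, u (T^[n] x) :=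
    Finset.sum_le_sum (fun n _ => h2x n (tN N n x))
  have hsplit : ∑ n ∈ Finset.Ioc 0 N, a n
      = ∑ n ∈ Finset.Ioc 0 (n₀ N), a n + ∑ n ∈ Finset.Ioc (n₀ N) N, a n :=
    (Finset.sum_Ioc_consecutive _ (Nat.zero_le _) (hn₀leN N)).symm
  have husplit : ∑ n ∈ Finset.Ioc (n₀ N) N, u (T^[n] x)
      = ∑ n ∈ Finset.Ioc 0 N, u (T^[n] x) - ∑ n ∈ Finset.Ioc 0 (n₀ N), u (T^[n] x) := by
    rw [← Finset.sum_Ioc_consecutive (fun n => u (T^[n] x)) (Nat.zero_le (n₀ N)) (hn₀leN N)]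
    ring
  have hwmono : ∑ n ∈ Finset.Ioc 0 (n₀ N), w m k (T^[n] x)
      ≤ ∑ n ∈ Finset.Ioc 0 N, w m k (T^[n] x) :=
    Finset.sum_le_sum_of_subset_of_nonneg
      (Finset.Ioc_subset_Ioc le_rfl (hn₀leN N)) (fun n _ _ => hwnn m k _)
  have hDabs : |D N| ≤ (N : ℝ)⁻¹ * ∑ n ∈ Finset.Icc 1 N, a n := by
    rw [hD]
    simp only
    rw [abs_mul, abs_inv, Nat.abs_cast]
    exact mul_le_mul_of_nonneg_left (Finset.abs_sum_le_sum_abs _ _) hinv0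
  have hkey2 : (N : ℝ)⁻¹ * ∑ n ∈ Finset.Icc 1 N, a n ≤
      ((m : ℝ) + 1)⁻¹ + (N : ℝ)⁻¹ * ∑ n ∈ Finset.Icc 1 N, w m k (T^[n] x)
        + ((N : ℝ)⁻¹ * ∑ n ∈ Finset.Icc 1 N, u (T^[n] x)
            - (N : ℝ)⁻¹ * ∑ n ∈ Finset.Icc 1 (n₀ N), u (T^[n] x)) := by
    rw [hIccIoc N, hIccIoc (n₀ N)]
    have hb1 : ∑ n ∈ Finset.Ioc 0 N, a n ≤
        (n₀ N : ℝ) * ((m : ℝ) + 1)⁻¹ + ∑ n ∈ Finset.Ioc 0 N, w m k (T^[n] x)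
          + (∑ n ∈ Finset.Ioc 0 N, u (T^[n] x) - ∑ n ∈ Finset.Ioc 0 (n₀ N), u (T^[n] x)) := by
      rw [hsplit]
      refine le_trans (add_le_add hhead htailb) ?_
      rw [husplit]
      linarith [hwmono]
    have hmul := mul_le_mul_of_nonneg_left hb1 hinv0
    refine le_trans hmul ?_
    have hr : (N : ℝ)⁻¹ * ((n₀ N : ℝ) * ((m : ℝ) + 1)⁻¹) ≤ ((m : ℝ) + 1)⁻¹ := by
      have hle : (n₀ N : ℝ) ≤ N := by exact_mod_cast hn₀leN N
      have hstep := mul_le_mul_of_nonneg_right hle (show (0:ℝ) ≤ ((m : ℝ) + 1)⁻¹ by positivity)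
      calc (N : ℝ)⁻¹ * ((n₀ N : ℝ) * ((m : ℝ) + 1)⁻¹)
          ≤ (N : ℝ)⁻¹ * ((N : ℝ) * ((m : ℝ) + 1)⁻¹) := by
            exact mul_le_mul_of_nonneg_left hstep hinv0
        _ = ((m : ℝ) + 1)⁻¹ := by field_simp
    have hexp : (N : ℝ)⁻¹ * ((n₀ N : ℝ) * ((m : ℝ) + 1)⁻¹ + ∑ n ∈ Finset.Ioc 0 N, w m k (T^[n] x)
          + (∑ n ∈ Finset.Ioc 0 N, u (T^[n] x) - ∑ n ∈ Finset.Ioc 0 (n₀ N), u (T^[n] x)))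
        = (N : ℝ)⁻¹ * ((n₀ N : ℝ) * ((m : ℝ) + 1)⁻¹)
          + (N : ℝ)⁻¹ * ∑ n ∈ Finset.Ioc 0 N, w m k (T^[n] x)
          + ((N : ℝ)⁻¹ * ∑ n ∈ Finset.Ioc 0 N, u (T^[n] x)
              - (N : ℝ)⁻¹ * ∑ n ∈ Finset.Ioc 0 (n₀ N), u (T^[n] x)) := by ring
    rw [hexp]
    linarith [hr]
  calc |D N| ≤ (N : ℝ)⁻¹ * ∑ n ∈ Finset.Icc 1 N, a n := hDabs
    _ ≤ _ := hkey2
    _ < ε := by linarith [hm', hNw, hNtail]
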